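/- Let R be an m × m upper triangular real matrix, let 1 ≤ i ≤ m−1, and let R' be the matrix obtained from R by swapping columns i and i+1. Then there exists an orthogonal m × m real matrix G that agrees with the identity matrix outside rows/columns i and i+1, and whose restriction to the 2×2 block on rows and columns {i, i+1} is a rotation [[c, s], [−s, c]] with c² + s² = 1, such that G · R' is upper triangular. -/

import Mathlib

/-- Let R be an m × m upper triangular real matrix, 1 ≤ i ≤ m−1,
and let R' be R with columns i and i+1 swapped (1-indexed; 0-indexed columns i−1
and i).  Then there is an orthogonal matrix G agreeing with the identity outside
rows/columns i and i+1, whose 2×2 block on rows/columns {i, i+1} is a rotation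
[[c, s], [−s, c]] with c² + s² = 1, such that G · R' is upper triangular. -/
theorem givens_retriangularization (m : ℕ) (R : Matrix (Fin m) (Fin m) ℝ)
    (hR : R.BlockTriangular id) (i : ℕ) (hi1 : 1 ≤ i) (hi2 : i ≤ m - 1) :
    ∃ G : Matrix (Fin m) (Fin m) ℝ, ∃ c s : ℝ,
      G ∈ Matrix.orthogonalGroup (Fin m) ℝ ∧
      c ^ 2 + s ^ 2 = 1 ∧
      G ⟨i - 1, by omega⟩ ⟨i - 1, by omega⟩ = c ∧
      G ⟨i - 1, by omega⟩ ⟨i, by omega⟩ = s ∧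
      G ⟨i, by omega⟩ ⟨i - 1, by omega⟩ = -s ∧
      G ⟨i, by omega⟩ ⟨i, by omega⟩ = c ∧
      (∀ r c' : Fin m,
        ((r ≠ ⟨i - 1, by omega⟩ ∧ r ≠ ⟨i, by omega⟩) ∨
          (c' ≠ ⟨i - 1, by omega⟩ ∧ c' ≠ ⟨i, by omega⟩)) →
        G r c' = (1 : Matrix (Fin m) (Fin m) ℝ) r c') ∧
      (G * R.submatrix id (Equiv.swap ⟨i - 1, by omega⟩ ⟨i, by omega⟩)).BlockTriangular id := by
  classical
  have hm : 2 ≤ m := by omega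
  set p : Fin m := ⟨i - 1, by omega⟩ with hp
  set q : Fin m := ⟨i, by omega⟩ with hq
  have hpq : p ≠ q := by
    simp only [hp, hq, Ne, Fin.mk.injEq]
    omega
  have hpltq : (p : ℕ) < (q : ℕ) := by simp [hp, hq]; omega
  set a : ℝ := R p q with ha
  set b : ℝ := R q q with hb
  -- choose the rotation
  obtain ⟨c, s, hcs, hrot⟩ : ∃ c s : ℝ, c ^ 2 + s ^ 2 = 1 ∧ c * b = s * a := by
    by_cases h : a = 0 ∧ b = 0
    · exact ⟨1, 0, by ring, by rw [h.1, h.2]; ring⟩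
    · have hpos : 0 < a ^ 2 + b ^ 2 := by
        rcases (not_and_or.mp h) with h' | h'
        · have : 0 < a ^ 2 := by positivity
          nlinarith [sq_nonneg b]
        · have : 0 < b ^ 2 := by positivity
          nlinarith [sq_nonneg a]
      set n : ℝ := Real.sqrt (a ^ 2 + b ^ 2) with hn
      have hn0 : n ≠ 0 := ne_of_gt (Real.sqrt_pos.mpr hpos)
      have hnsq : n ^ 2 = a ^ 2 + b ^ 2 := Real.sq_sqrt (le_of_lt hpos)
      refine ⟨a / n, b / n, ?_, ?_⟩
      · field_simp
        linarith [hnsq]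
      · field_simp
  -- define the Givens rotation matrix
  set G : Matrix (Fin m) (Fin m) ℝ := fun r k =>
    if r = p then (if k = p then c else if k = q then s else 0)
    else if r = q then (if k = p then -s else if k = q then c else 0)
    else (if r = k then 1 else 0) with hG
  -- row sums
  have hsum2 : ∀ (A B : ℝ) (v : Fin m → ℝ),
      (∑ k, (if k = p then A else if k = q then B else 0) * v k) = A * v p + B * v q := by
    intro A B v
    have h1 : ∀ k, (if k = p then A else if k = q then B else (0:ℝ)) * v k
        = (if k = p then A * v p else 0) + (if k = q then B * v q else 0) := by
      intro k
      by_cases h1 : k = p <;> by_cases h2 : k = q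
      · exact absurd (h1.symm.trans h2) hpq
      · subst h1; simp [hpq]
      · subst h2; simp [hpq.symm]
      · simp [h1, h2]
    rw [Finset.sum_congr rfl (fun k _ => h1 k), Finset.sum_add_distrib]
    simp
  have hsum1 : ∀ (r : Fin m) (v : Fin m → ℝ),
      (∑ k, (if r = k then (1:ℝ) else 0) * v k) = v r := by
    intro r v
    simp
  have hGp : ∀ (M : Matrix (Fin m) (Fin m) ℝ) (c' : Fin m),
      (G * M) p c' = c * M p c' + s * M q c' := by
    intro M c'
    rw [Matrix.mul_apply]
    simp only [hG, if_pos rfl]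
    exact hsum2 c s (fun k => M k c')
  have hGq : ∀ (M : Matrix (Fin m) (Fin m) ℝ) (c' : Fin m),
      (G * M) q c' = -s * M p c' + c * M q c' := by
    intro M c'
    rw [Matrix.mul_apply]
    simp only [hG, if_neg hpq.symm, if_pos rfl]
    exact hsum2 (-s) c (fun k => M k c')
  have hGo : ∀ (M : Matrix (Fin m) (Fin m) ℝ) (r c' : Fin m), r ≠ p → r ≠ q →
      (G * M) r c' = M r c' := by
    intro M r c' h1 h2
    rw [Matrix.mul_apply]
    simp only [hG, if_neg h1, if_neg h2]
    exact hsum1 r (fun k => M k c')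
  have hqp : q ≠ p := hpq.symm
  have hpval : (p : ℕ) = i - 1 := rfl
  have hqval : (q : ℕ) = i := rfl
  have Gpp : G p p = c := by simp [hG]
  have Gpq : G p q = s := by simp [hG, hpq, hqp]
  have Gqp : G q p = -s := by simp [hG, hqp]
  have Gqq : G q q = c := by simp [hG, hqp]
  have Gor : ∀ (r k : Fin m), r ≠ p → r ≠ q → G r k = if r = k then 1 else 0 := by
    intro r k h1 h2; simp [hG, h1, h2]
  have hGT : star G = G.transpose := by
    ext r k
    simp [Matrix.star_apply]
  refine ⟨G, c, s, ?_, hcs, Gpp, Gpq, Gqp, Gqq, ?_, ?_⟩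
  · -- orthogonality
    rw [Matrix.mem_orthogonalGroup_iff]
    ext r k
    by_cases h1 : r = p
    · subst h1
      rw [hGp]
      simp only [Matrix.transpose_apply]
      by_cases h2 : k = p
      · subst h2
        rw [Gpp, Gpq, Matrix.one_apply_eq]
        linear_combination hcs
      · by_cases h3 : k = q
        · subst h3
          rw [Gqp, Gqq, Matrix.one_apply_ne hpq]
          ring
        · rw [Gor k p h2 h3, Gor k q h2 h3, if_neg h2, if_neg h3,
            Matrix.one_apply_ne (Ne.symm h2)]
          ring
    · by_cases h2 : r = q
      · subst h2
        rw [hGq]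
        simp only [Matrix.transpose_apply]
        by_cases h3 : k = p
        · subst h3
          rw [Gpp, Gpq, Matrix.one_apply_ne hqp]
          ring
        · by_cases h4 : k = q
          · subst h4
            rw [Gqp, Gqq, Matrix.one_apply_eq]
            linear_combination hcs
          · rw [Gor k p h3 h4, Gor k q h3 h4, if_neg h3, if_neg h4,
              Matrix.one_apply_ne (Ne.symm h4)]
            ring
      · rw [hGo _ _ _ h1 h2]
        simp only [Matrix.transpose_apply]
        by_cases h3 : k = p
        · subst h3
          simp [hG, h1, h2, Matrix.one_apply]
        · by_cases h4 : k = q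
          · subst h4
            simp [hG, hqp, h1, h2, Matrix.one_apply]
          · simp [hG, h3, h4, Matrix.one_apply, eq_comm]
  · -- identity off the plane
    intro r c' h
    rcases h with ⟨h1, h2⟩ | ⟨h1, h2⟩
    · rw [Gor r c' h1 h2, Matrix.one_apply]
    · by_cases h3 : r = p
      · subst h3
        simp [hG, h1, h2, Matrix.one_apply, Ne.symm h1]
      · by_cases h4 : r = q
        · subst h4
          simp [hG, hqp, h1, h2, Matrix.one_apply, Ne.symm h2]
        · rw [Gor r c' h3 h4, Matrix.one_apply]
  · -- triangularity
    intro r c' hlt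
    simp only [id] at hlt
    set M : Matrix (Fin m) (Fin m) ℝ := R.submatrix id (Equiv.swap p q) with hM
    have hMval : ∀ r' k, M r' k = R r' (Equiv.swap p q k) := fun _ _ => rfl
    have hRz : ∀ r' k : Fin m, (k : ℕ) < (r' : ℕ) → R r' k = 0 := by
      intro r' k h
      exact hR (Fin.lt_def.mpr h)
    by_cases h1 : r = p
    · subst h1
      rw [hGp]
      have hltn : (c' : ℕ) < (p : ℕ) := Fin.lt_def.mp hlt
      have hc'p : c' ≠ p := Fin.ne_of_lt hlt
      have hc'q : c' ≠ q := fun h => by rw [h] at hltn; omega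
      rw [hMval, hMval, Equiv.swap_apply_of_ne_of_ne hc'p hc'q]
      rw [hRz p c' hltn, hRz q c' (by omega)]
      ring
    · by_cases h2 : r = q
      · subst h2
        rw [hGq]
        have hltn : (c' : ℕ) < (q : ℕ) := Fin.lt_def.mp hlt
        by_cases h3 : c' = p
        · subst h3
          rw [hMval, hMval, Equiv.swap_apply_left, ← ha, ← hb]
          linarith [hrot]
        · have hnep : (c' : ℕ) ≠ (p : ℕ) := fun h => h3 (Fin.ext h)
          have hlt' : (c' : ℕ) < (p : ℕ) := by omega
          have hc'q : c' ≠ q := Fin.ne_of_lt hlt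
          rw [hMval, hMval, Equiv.swap_apply_of_ne_of_ne h3 hc'q]
          rw [hRz p c' hlt', hRz q c' (by omega)]
          ring
      · rw [hGo _ _ _ h1 h2, hMval]
        have hltn : (c' : ℕ) < (r : ℕ) := Fin.lt_def.mp hlt
        have hnerq : (r : ℕ) ≠ (q : ℕ) := fun h => h2 (Fin.ext h)
        by_cases h3 : c' = p
        · subst h3
          rw [Equiv.swap_apply_left]
          exact hRz r q (by omega)
        · by_cases h4 : c' = q
          · subst h4
            rw [Equiv.swap_apply_right]
            exact hRz r p (by omega)
          · rw [Equiv.swap_apply_of_ne_of_ne h3 h4]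
            exact hRz r c' hltn
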